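/- arXiv:2008.11051 — 4 statements merged into one kernel-verified Lean document; each statement's English description precedes it below -/
import Mathlib

section
/- Let n ≥ 1, m ≥ 1, let B₀,…,B_{n−1} and B̃₀,…,B̃_{n−1} be m×m real matrices with 0 ≤ B̃ᵢ ≤ Bᵢ entrywise for i = 0,…,n−1, and consider the monic matrix polynomials B(z) = zⁿI − Σ_{i=0}^{n−1} Bᵢ zⁱ and B̃(z) = zⁿI − Σ_{i=0}^{n−1} B̃ᵢ zⁱ. Then the scalar polynomials det B(z) and det B̃(z) each have a root of maximal modulus which is a nonnegative real number; calling these roots λ and λ̃ respectively (so λ = max{|z| : z ∈ ℂ, det B(z) = 0} is itself a root of det B(z), and similarly for λ̃), one has λ̃ ≤ λ. -/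
open Polynomial Matrix

/-- The scalar polynomial `det (zⁿ I - ∑_{i<n} Bᵢ zⁱ)` over `ℂ`, for an `m×m` real
monic matrix polynomial with coefficients `B i`. -/
noncomputable def detMatPoly (m n : ℕ) (B : Fin n → Matrix (Fin m) (Fin m) ℝ) :
    Polynomial ℂ :=
  Matrix.det
    (((Polynomial.X : Polynomial ℂ) ^ n) • (1 : Matrix (Fin m) (Fin m) (Polynomial ℂ)) -
      ∑ i : Fin n, ((Polynomial.X : Polynomial ℂ) ^ (i : ℕ)) •
        ((B i).map fun x => Polynomial.C (x : ℂ)))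


set_option maxHeartbeats 1000000
set_option linter.unusedSectionVars false

open Matrix Filter

attribute [local instance] Matrix.linftyOpNormedRing Matrix.linftyOpNormedAlgebra

section CompanionCorrespondence
variable {m n : ℕ}

lemma eval_detMatPoly (m n : ℕ) (B : Fin n → Matrix (Fin m) (Fin m) ℝ) (z : ℂ) :
    (detMatPoly m n B).eval z =
      Matrix.det (z ^ n • (1 : Matrix (Fin m) (Fin m) ℂ) -
        ∑ i : Fin n, z ^ (i : ℕ) • ((B i).map (fun x : ℝ => (x : ℂ)))) := by
  unfold detMatPoly
  rw [← Polynomial.coe_evalRingHom, RingHom.map_det]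
  congr 1
  ext k l
  simp [Matrix.map_apply, Matrix.sub_apply, Matrix.sum_apply, Matrix.smul_apply,
    Matrix.one_apply, apply_ite]
  rw [Polynomial.eval_finset_sum]
  exact Finset.sum_congr rfl fun i _ => by rw [Polynomial.eval_mul, Polynomial.eval_C,
    Polynomial.eval_pow, Polynomial.eval_X, mul_comm]

/-- Block companion matrix. -/
def compM (m n : ℕ) (B : Fin n → Matrix (Fin m) (Fin m) ℝ) :
    Matrix (Fin n × Fin m) (Fin n × Fin m) ℝ :=
  fun p q =>
    if (p.1 : ℕ) + 1 = (q.1 : ℕ) then (if p.2 = q.2 then 1 else 0)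
    else if (p.1 : ℕ) + 1 = n then B q.1 p.2 q.2 else 0

lemma compM_mulVec_lt (B : Fin n → Matrix (Fin m) (Fin m) ℝ) (w : Fin n × Fin m → ℂ)
    (i : Fin n) (k : Fin m) (h : (i : ℕ) + 1 < n) :
    (((compM m n B).map (fun x : ℝ => (x : ℂ))) *ᵥ w) (i, k) = w (⟨(i : ℕ) + 1, h⟩, k) := by
  rw [Matrix.mulVec, dotProduct, Fintype.sum_prod_type]
  rw [Finset.sum_eq_single (⟨(i : ℕ) + 1, h⟩ : Fin n)]
  · simp [compM, Matrix.map_apply, apply_ite (fun x : ℝ => (x : ℂ))]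
  · intro j _ hj
    have hj' : (i : ℕ) + 1 ≠ (j : ℕ) := fun hc => hj (by ext; simp [hc.symm])
    have hn' : (i : ℕ) + 1 ≠ n := Nat.ne_of_lt h
    simp [compM, Matrix.map_apply, hj', hn']
  · simp

lemma compM_mulVec_last (B : Fin n → Matrix (Fin m) (Fin m) ℝ) (w : Fin n × Fin m → ℂ)
    (i : Fin n) (k : Fin m) (h : (i : ℕ) + 1 = n) :
    (((compM m n B).map (fun x : ℝ => (x : ℂ))) *ᵥ w) (i, k) =
      ∑ j : Fin n, ∑ l : Fin m, (B j k l : ℂ) * w (j, l) := by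
  rw [Matrix.mulVec, dotProduct, Fintype.sum_prod_type]
  refine Finset.sum_congr rfl fun j _ => Finset.sum_congr rfl fun l _ => ?_
  have hj' : (i : ℕ) + 1 ≠ (j : ℕ) := fun hc => absurd (hc ▸ j.isLt) (by omega)
  simp only [compM, Matrix.map_apply, if_neg hj', if_pos h, Complex.ofReal_eq_zero]

lemma Mz_mulVec (B : Fin n → Matrix (Fin m) (Fin m) ℝ) (z : ℂ) (v : Fin m → ℂ) (k : Fin m) :
    ((z ^ n • (1 : Matrix (Fin m) (Fin m) ℂ) -
        ∑ i : Fin n, z ^ (i : ℕ) • ((B i).map (fun x : ℝ => (x : ℂ)))) *ᵥ v) k =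
      z ^ n * v k - ∑ j : Fin n, ∑ l : Fin m, (B j k l : ℂ) * (z ^ (j : ℕ) * v l) := by
  rw [Matrix.sub_mulVec, Matrix.smul_mulVec, Matrix.one_mulVec]
  simp only [Pi.sub_apply, Pi.smul_apply, smul_eq_mul]
  congr 1
  rw [Matrix.mulVec, dotProduct]
  simp only [Matrix.sum_apply, Matrix.smul_apply, Matrix.map_apply, smul_eq_mul]
  rw [Finset.sum_comm]
  refine Finset.sum_congr rfl fun l _ => ?_
  rw [Finset.sum_mul]
  refine Finset.sum_congr rfl fun j _ => by ring

/-- nonzero kernel vector of `B(z)` iff eigenvector of companion matrix. -/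
lemma ker_iff_eig (hn : 1 ≤ n) (B : Fin n → Matrix (Fin m) (Fin m) ℝ) (z : ℂ) :
    (∃ v, v ≠ 0 ∧ (z ^ n • (1 : Matrix (Fin m) (Fin m) ℂ) -
        ∑ i : Fin n, z ^ (i : ℕ) • ((B i).map (fun x : ℝ => (x : ℂ)))) *ᵥ v = 0) ↔
    (∃ w, w ≠ 0 ∧ ((compM m n B).map (fun x : ℝ => (x : ℂ))) *ᵥ w = z • w) := by
  have h0 : (0 : ℕ) < n := hn
  constructor
  · rintro ⟨v, hv0, hv⟩
    have hkey : ∀ k : Fin m, ∑ j : Fin n, ∑ l : Fin m, (B j k l : ℂ) * (z ^ (j : ℕ) * v l)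
        = z ^ n * v k := by
      intro k
      have := congrFun hv k
      rw [Mz_mulVec] at this
      simp only [Pi.zero_apply, sub_eq_zero] at this
      exact this.symm
    refine ⟨fun p => z ^ (p.1 : ℕ) * v p.2, ?_, ?_⟩
    · intro hc
      apply hv0
      funext k
      have := congrFun hc (⟨0, h0⟩, k)
      simpa using this
    · funext p
      obtain ⟨i, k⟩ := p
      rcases lt_or_eq_of_le (Nat.succ_le_of_lt i.isLt) with h | h
      · rw [compM_mulVec_lt B _ i k h]
        simp only [Pi.smul_apply, smul_eq_mul]
        ring
      · rw [compM_mulVec_last B _ i k h]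
        rw [hkey k]
        simp only [Pi.smul_apply, smul_eq_mul]
        rw [← mul_assoc, ← pow_succ']
        congr 2
        omega
  · rintro ⟨w, hw0, hw⟩
    set v : Fin m → ℂ := fun k => w (⟨0, h0⟩, k) with hv
    have hstep : ∀ (jn : ℕ) (hj : jn < n) (k : Fin m), w (⟨jn, hj⟩, k) = z ^ jn * v k := by
      intro jn
      induction jn with
      | zero => intro hj k; simp [hv]
      | succ p ih =>
        intro hj k
        have hp : p < n := by omega
        have h1 := compM_mulVec_lt B w ⟨p, hp⟩ k hj
        rw [hw] at h1
        calc w (⟨p + 1, hj⟩, k) = z * w (⟨p, hp⟩, k) := by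
              rw [← h1]; simp
          _ = z * (z ^ p * v k) := by rw [ih hp k]
          _ = z ^ (p + 1) * v k := by ring
    refine ⟨v, ?_, ?_⟩
    · intro hc
      apply hw0
      funext p
      obtain ⟨j, k⟩ := p
      have h2 := hstep (j : ℕ) j.isLt k
      rw [Fin.eta] at h2
      rw [h2]
      have : v k = 0 := congrFun hc k
      simp [this]
    · funext k
      have hlast : (n - 1) + 1 = n := by omega
      have h2 := compM_mulVec_last B w ⟨n - 1, by omega⟩ k (by simpa using hlast)
      rw [hw] at h2
      have h3 : ∀ (j : Fin n) (l : Fin m), w (j, l) = z ^ (j : ℕ) * v l := by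
        intro j l
        have := hstep (j : ℕ) j.isLt l
        rwa [Fin.eta] at this
      rw [Mz_mulVec]
      simp only [Pi.zero_apply, sub_eq_zero]
      have h4 : ∑ j : Fin n, ∑ l : Fin m, (B j k l : ℂ) * w (j, l)
          = ∑ j : Fin n, ∑ l : Fin m, (B j k l : ℂ) * (z ^ (j : ℕ) * v l) := by
        refine Finset.sum_congr rfl fun j _ => Finset.sum_congr rfl fun l _ => by rw [h3]
      rw [h4] at h2
      rw [← h2]
      simp only [Pi.smul_apply, smul_eq_mul]
      have h5 := hstep (n - 1) (by omega) k
      rw [h5, ← mul_assoc, ← pow_succ']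
      congr 2
      omega

end CompanionCorrespondence

section PerronFrobenius
variable {N : Type*} [Fintype N] [DecidableEq N] [Nonempty N]

lemma entry_norm_le (M : Matrix N N ℂ) (i j : N) : ‖M i j‖ ≤ ‖M‖ := by
  have h1 : ‖M i j‖₊ ≤ ∑ l, ‖M i l‖₊ :=
    Finset.single_le_sum (f := fun l => ‖M i l‖₊) (fun _ _ => zero_le) (Finset.mem_univ j)
  have h2 : (∑ l, ‖M i l‖₊) ≤ ‖M‖₊ := by
    rw [Matrix.linfty_opNNNorm_def]
    exact Finset.le_sup (f := fun i => ∑ l, ‖M i l‖₊) (Finset.mem_univ i)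
  exact_mod_cast h1.trans h2

lemma pow_entry_mono {A A' : Matrix N N ℝ} (h0 : ∀ i j, 0 ≤ A i j)
    (hle : ∀ i j, A i j ≤ A' i j) (k : ℕ) :
    ∀ i j, 0 ≤ (A ^ k) i j ∧ (A ^ k) i j ≤ (A' ^ k) i j := by
  induction k with
  | zero => intro i j; simp [Matrix.one_apply]; split <;> simp
  | succ p ih =>
    intro i j
    rw [pow_succ, pow_succ, Matrix.mul_apply, Matrix.mul_apply]
    constructor
    · exact Finset.sum_nonneg fun l _ => mul_nonneg (ih i l).1 (h0 l j)
    · refine Finset.sum_le_sum fun l _ => mul_le_mul (ih i l).2 (hle l j) (h0 l j) ?_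
      exact le_trans (ih i l).1 (ih i l).2

lemma norm_map_pow_mono {A A' : Matrix N N ℝ} (h0 : ∀ i j, 0 ≤ A i j)
    (hle : ∀ i j, A i j ≤ A' i j) (k : ℕ) :
    ‖(A.map (fun x : ℝ => (x : ℂ))) ^ k‖₊ ≤ ‖(A'.map (fun x : ℝ => (x : ℂ))) ^ k‖₊ := by
  have hmap : ∀ (M : Matrix N N ℝ), (M.map (fun x : ℝ => (x : ℂ))) ^ k = (M ^ k).map (fun x : ℝ => (x : ℂ)) := by
    intro M
    exact (map_pow (Complex.ofRealHom.mapMatrix) M k).symm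
  rw [hmap A, hmap A', Matrix.linfty_opNNNorm_def, Matrix.linfty_opNNNorm_def]
  refine Finset.sup_mono_fun fun i _ => Finset.sum_le_sum fun j _ => ?_
  simp only [Matrix.map_apply, Complex.nnnorm_real]
  have := pow_entry_mono h0 hle k i j
  have h1 := pow_entry_mono h0 hle k i j
  rw [← NNReal.coe_le_coe]
  simpa [Real.nnnorm_of_nonneg, coe_nnnorm, Real.norm_eq_abs, abs_of_nonneg h1.1,
    abs_of_nonneg (h1.1.trans h1.2)] using h1.2

lemma radius_mono {A A' : Matrix N N ℝ} (h0 : ∀ i j, 0 ≤ A i j)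
    (hle : ∀ i j, A i j ≤ A' i j) :
    spectralRadius ℂ (A.map (fun x : ℝ => (x : ℂ))) ≤
      spectralRadius ℂ (A'.map (fun x : ℝ => (x : ℂ))) := by
  have g1 := spectrum.pow_nnnorm_pow_one_div_tendsto_nhds_spectralRadius
    (A.map (fun x : ℝ => (x : ℂ)))
  have g2 := spectrum.pow_nnnorm_pow_one_div_tendsto_nhds_spectralRadius
    (A'.map (fun x : ℝ => (x : ℂ)))
  refine le_of_tendsto_of_tendsto' g1 g2 fun k => ?_
  exact ENNReal.rpow_le_rpow (by exact_mod_cast norm_map_pow_mono h0 hle k)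
    (by positivity)


lemma pow_entry_nonneg {A : Matrix N N ℝ} (hA : ∀ i j, 0 ≤ A i j) (k : ℕ) (i j : N) :
    0 ≤ (A ^ k) i j :=
  (pow_entry_mono hA (fun i j => le_refl (A i j)) k i j).1

lemma map_pow_entry (A : Matrix N N ℝ) (k : ℕ) (i j : N) :
    ((A.map (fun x : ℝ => (x : ℂ))) ^ k) i j = (((A ^ k) i j : ℝ) : ℂ) := by
  have hmap : (A.map (fun x : ℝ => (x : ℂ))) ^ k = (A ^ k).map (fun x : ℝ => (x : ℂ)) :=
    (map_pow (Complex.ofRealHom.mapMatrix) A k).symm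
  rw [hmap]
  rfl

lemma ev_pow_norm_le (A : Matrix N N ℂ) {r t : ℝ}
    (hsp : spectralRadius ℂ A = ENNReal.ofReal r) (hr : 0 ≤ r) (ht : r < t) :
    ∀ᶠ k : ℕ in atTop, ‖A ^ k‖ ≤ t ^ k := by
  have htpos : 0 < t := lt_of_le_of_lt hr ht
  have hlt : spectralRadius ℂ A < ENNReal.ofReal t := by
    rw [hsp]; exact (ENNReal.ofReal_lt_ofReal_iff htpos).mpr ht
  have hg := spectrum.pow_nnnorm_pow_one_div_tendsto_nhds_spectralRadius A
  filter_upwards [hg.eventually_lt_const hlt, eventually_ge_atTop 1] with k hk hk1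
  have hkne : (k : ℝ) ≠ 0 := by positivity
  have h2 : ((‖A ^ k‖₊ : ENNReal) ^ (1 / (k : ℝ))) ^ (k : ℝ) ≤
      (ENNReal.ofReal t) ^ (k : ℝ) := ENNReal.rpow_le_rpow hk.le (by positivity)
  rw [← ENNReal.rpow_mul, one_div, inv_mul_cancel₀ hkne, ENNReal.rpow_one] at h2
  rw [ENNReal.ofReal_rpow_of_pos htpos, ← enorm_eq_nnnorm, ← ofReal_norm] at h2
  have h3 := (ENNReal.ofReal_le_ofReal_iff (by positivity)).mp h2
  rwa [Real.rpow_natCast] at h3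

lemma summable_norm_res (A : Matrix N N ℂ) {r : ℝ}
    (hsp : spectralRadius ℂ A = ENNReal.ofReal r) (hr : 0 ≤ r) {z : ℂ}
    (hz : r < ‖z‖) (c : ℕ) :
    Summable (fun k : ℕ => ‖(z ^ (k + c))⁻¹ • A ^ k‖) := by
  obtain ⟨t, ht1, ht2⟩ : ∃ t : ℝ, r < t ∧ t < ‖z‖ :=
    ⟨(r + ‖z‖) / 2, by linarith, by linarith⟩
  have htpos : 0 < t := lt_of_le_of_lt hr ht1
  have hzpos : (0 : ℝ) < ‖z‖ := lt_trans htpos ht2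
  have hgeo : Summable (fun k : ℕ => (‖z‖ ^ c)⁻¹ * (t / ‖z‖) ^ k) :=
    (summable_geometric_of_lt_one (by positivity) ((div_lt_one hzpos).mpr ht2)).mul_left _
  refine hgeo.of_norm_bounded_eventually_nat ?_
  filter_upwards [ev_pow_norm_le A hsp hr ht1] with k hk
  rw [Real.norm_of_nonneg (norm_nonneg _), norm_smul, norm_inv, norm_pow]
  have key : (‖z‖ ^ (k + c))⁻¹ * t ^ k = (‖z‖ ^ c)⁻¹ * (t / ‖z‖) ^ k := by
    rw [pow_add, mul_inv, div_pow, div_eq_mul_inv]; ring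
  calc (‖z‖ ^ (k + c))⁻¹ * ‖A ^ k‖ ≤ (‖z‖ ^ (k + c))⁻¹ * t ^ k := by
        exact mul_le_mul_of_nonneg_left hk (by positivity)
    _ = (‖z‖ ^ c)⁻¹ * (t / ‖z‖) ^ k := key

lemma res_id (A : Matrix N N ℂ) {r : ℝ}
    (hsp : spectralRadius ℂ A = ENNReal.ofReal r) (hr : 0 ≤ r) {z : ℂ}
    (hz : r < ‖z‖) :
    (z • (1 : Matrix N N ℂ) - A) * (∑' k : ℕ, (z ^ (k + 1))⁻¹ • A ^ k) = 1 ∧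
    (∑' k : ℕ, (z ^ (k + 1))⁻¹ • A ^ k) * (z • (1 : Matrix N N ℂ) - A) = 1 := by
  have hz0 : z ≠ 0 := by
    intro hc; rw [hc, norm_zero] at hz; exact absurd hz (not_lt.mpr hr)
  set g : ℕ → Matrix N N ℂ := fun k => (z ^ k)⁻¹ • A ^ k with hgdef
  set f : ℕ → Matrix N N ℂ := fun k => (z ^ (k + 1))⁻¹ • A ^ k with hfdef
  have hfs : Summable f := Summable.of_norm (summable_norm_res A hsp hr hz 1)
  have hgs : Summable g := by
    have := Summable.of_norm (summable_norm_res A hsp hr hz 0)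
    simp only [add_zero] at this
    exact this
  have hg1 : HasSum (fun k => g (k + 1)) ((∑' k, g k) - g 0) := by
    refine (hasSum_nat_add_iff 1).mpr ?_
    simpa using hgs.hasSum
  have htel : HasSum (fun k => g k - g (k + 1)) (g 0) := by
    simpa using hgs.hasSum.sub hg1
  have hg0 : g 0 = 1 := by simp [hgdef]
  have hcoef : ∀ k : ℕ, ((z ^ (k + 1))⁻¹ * z) = (z ^ k)⁻¹ := by
    intro k
    rw [pow_succ']
    field_simp
  constructor
  · have h1 : HasSum (fun k => (z • (1 : Matrix N N ℂ) - A) * f k)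
        ((z • (1 : Matrix N N ℂ) - A) * ∑' k, f k) := hfs.hasSum.mul_left _
    have h2 : (fun k => (z • (1 : Matrix N N ℂ) - A) * f k) = fun k => g k - g (k + 1) := by
      funext k
      rw [hfdef, hgdef]
      simp only [sub_mul, smul_mul_assoc, one_mul, mul_smul_comm]
      conv_rhs => rw [pow_succ']
      rw [smul_sub, smul_smul, hcoef k, ← pow_succ' z k, ← pow_succ' A k]
    rw [h2] at h1
    rw [h1.unique htel, hg0]
  · have h1 : HasSum (fun k => f k * (z • (1 : Matrix N N ℂ) - A))
        ((∑' k, f k) * (z • (1 : Matrix N N ℂ) - A)) := hfs.hasSum.mul_right _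
    have h2 : (fun k => f k * (z • (1 : Matrix N N ℂ) - A)) = fun k => g k - g (k + 1) := by
      funext k
      rw [hfdef, hgdef]
      simp only [mul_sub, smul_mul_assoc, mul_smul_comm, mul_one]
      conv_rhs => rw [pow_succ]
      rw [smul_smul, mul_comm z, hcoef k, ← pow_succ z k, ← pow_succ A k]
    rw [h2] at h1
    rw [h1.unique htel, hg0]

lemma spec_iff_det (A : Matrix N N ℂ) (z : ℂ) :
    z ∈ spectrum ℂ A ↔ (z • (1 : Matrix N N ℂ) - A).det = 0 := by
  rw [spectrum.mem_iff, Algebra.algebraMap_eq_smul_one, Matrix.isUnit_iff_isUnit_det,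
    isUnit_iff_ne_zero, not_ne_iff]

theorem pf_main (A : Matrix N N ℝ) (hA : ∀ i j, 0 ≤ A i j) :
    ∃ ρ : ℝ, 0 ≤ ρ ∧
      ((ρ : ℂ) ∈ spectrum ℂ (A.map (fun x : ℝ => (x : ℂ)))) ∧
      (∀ z ∈ spectrum ℂ (A.map (fun x : ℝ => (x : ℂ))), ‖z‖ ≤ ρ) ∧
      spectralRadius ℂ (A.map (fun x : ℝ => (x : ℂ))) = ENNReal.ofReal ρ := by
  set Ac : Matrix N N ℂ := A.map (fun x : ℝ => (x : ℂ)) with hAc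
  obtain ⟨μ, hμmem, hμ⟩ := spectrum.exists_nnnorm_eq_spectralRadius Ac
  have hsp : spectralRadius ℂ Ac = ENNReal.ofReal ‖μ‖ := by
    rw [← hμ, ofReal_norm, enorm_eq_nnnorm]
  have hbound : ∀ z ∈ spectrum ℂ Ac, ‖z‖ ≤ ‖μ‖ := by
    intro z hzs
    have h1 : (‖z‖₊ : ENNReal) ≤ spectralRadius ℂ Ac :=
      le_iSup₂ (f := fun k (_ : k ∈ spectrum ℂ Ac) => (‖k‖₊ : ENNReal)) z hzs
    rw [← hμ] at h1
    exact_mod_cast h1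
  refine ⟨‖μ‖, norm_nonneg μ, ?_, hbound, hsp⟩
  rcases eq_or_lt_of_le (norm_nonneg μ) with h0 | hρpos
  · have : μ = 0 := norm_eq_zero.mp h0.symm
    rw [← h0]
    simpa [this] using hμmem
  by_contra hcon
  -- eigenvector for μ
  have hdet : (μ • (1 : Matrix N N ℂ) - Ac).det = 0 := (spec_iff_det Ac μ).mp hμmem
  obtain ⟨v, hv0, hv⟩ := Matrix.exists_mulVec_eq_zero_iff.mpr hdet
  have hAv : Ac *ᵥ v = μ • v := by
    rw [Matrix.sub_mulVec, Matrix.smul_mulVec, Matrix.one_mulVec, sub_eq_zero] at hv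
    exact hv.symm
  -- ρ := ‖μ‖ is not in the spectrum, so the resolvent is continuous there
  have hUnit : IsUnit ((↑‖μ‖ : ℂ) • (1 : Matrix N N ℂ) - Ac) := by
    have h1 := spectrum.notMem_iff.mp hcon
    rwa [Algebra.algebraMap_eq_smul_one] at h1
  set F : ℂ → Matrix N N ℂ := fun w => Ring.inverse (w • (1 : Matrix N N ℂ) - Ac) with hF
  have hcont : ContinuousAt F ((‖μ‖ : ℝ) : ℂ) := by
    have h1 : Continuous fun w : ℂ => w • (1 : Matrix N N ℂ) - Ac :=
      (continuous_id.smul continuous_const).sub continuous_const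
    have h2 : ContinuousAt Ring.inverse (((‖μ‖ : ℝ) : ℂ) • (1 : Matrix N N ℂ) - Ac) := by
      have h3 := NormedRing.inverse_continuousAt hUnit.unit
      rwa [IsUnit.unit_spec] at h3
    exact ContinuousAt.comp (g := Ring.inverse) h2 h1.continuousAt
  obtain ⟨Mb, hMbdef⟩ : ∃ Mb : ℝ, Mb = ‖F ((‖μ‖ : ℝ) : ℂ)‖ + 1 := ⟨_, rfl⟩
  have hMb1 : 0 < Mb := by rw [hMbdef]; positivity
  have hev : ∀ᶠ w in nhds ((‖μ‖ : ℝ) : ℂ), ‖F w‖ < Mb :=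
    (hcont.tendsto.norm).eventually_lt_const (hMbdef ▸ lt_add_one _)
  obtain ⟨δ, hδ0, hδ⟩ := Metric.eventually_nhds_iff.mp hev
  obtain ⟨i0, hi0⟩ := Function.ne_iff.mp hv0
  obtain ⟨V, hVdef⟩ : ∃ V : ℝ, V = ∑ j, ‖v j‖ := ⟨_, rfl⟩
  have hvi0 : 0 < ‖v i0‖ := norm_pos_iff.mpr hi0
  have hV : ‖v i0‖ ≤ V := hVdef ▸
    Finset.single_le_sum (f := fun j => ‖v j‖) (fun _ _ => norm_nonneg _) (Finset.mem_univ i0)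
  have hVpos : 0 < V := lt_of_lt_of_le hvi0 hV
  have hMbV : 0 < Mb * V + 1 := by nlinarith
  obtain ⟨ε, hε, hεeq⟩ : ∃ ε : ℝ, 0 < ε ∧ ε * (2 * (Mb * V + 1)) = ‖v i0‖ :=
    ⟨‖v i0‖ / (2 * (Mb * V + 1)), div_pos hvi0 (by linarith),
      div_mul_cancel₀ _ (by linarith)⟩
  obtain ⟨t, htρ, htδ, htε⟩ : ∃ t : ℝ, ‖μ‖ < t ∧ t - ‖μ‖ < δ ∧ t - ‖μ‖ ≤ ε := by
    refine ⟨‖μ‖ + min (δ / 2) ε, by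
      have := lt_min (half_pos hδ0) hε; linarith, ?_, ?_⟩
    · have h := min_le_left (δ / 2) ε; simp only [add_sub_cancel_left]; linarith
    · have h := min_le_right (δ / 2) ε; simp only [add_sub_cancel_left]; linarith
  have htpos : 0 < t := lt_trans hρpos htρ
  have hμne : ‖μ‖ ≠ 0 := ne_of_gt hρpos
  set z : ℂ := ((t / ‖μ‖ : ℝ) : ℂ) * μ with hzdef
  have hzn : ‖z‖ = t := by
    rw [hzdef, norm_mul, Complex.norm_real,
      Real.norm_of_nonneg (div_nonneg (le_of_lt htpos) (le_of_lt hρpos)),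
      div_mul_cancel₀ _ hμne]
  have htn : ‖((t : ℝ) : ℂ)‖ = t := by
    rw [Complex.norm_real, Real.norm_of_nonneg (le_of_lt htpos)]
  -- series at z and at t
  set S : Matrix N N ℂ := ∑' k : ℕ, (z ^ (k + 1))⁻¹ • Ac ^ k with hSdef
  set St : Matrix N N ℂ := ∑' k : ℕ, ((((t : ℝ) : ℂ)) ^ (k + 1))⁻¹ • Ac ^ k with hStdef
  have hzgt : ‖μ‖ < ‖z‖ := by rw [hzn]; exact htρ
  have htgt : ‖μ‖ < ‖((t : ℝ) : ℂ)‖ := by rw [htn]; exact htρ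
  obtain ⟨hz1, hz2⟩ := res_id Ac hsp (norm_nonneg μ) hzgt
  obtain ⟨ht1, ht2⟩ := res_id Ac hsp (norm_nonneg μ) htgt
  have hSt : St = F ((t : ℝ) : ℂ) := by
    let u : (Matrix N N ℂ)ˣ := ⟨((t : ℝ) : ℂ) • (1 : Matrix N N ℂ) - Ac, St, ht1, ht2⟩
    have h6 : Ring.inverse ((((t : ℝ) : ℂ)) • (1 : Matrix N N ℂ) - Ac) = St :=
      Ring.inverse_unit u
    rw [hF]
    exact h6.symm
  have hdistt : dist (((t : ℝ) : ℂ)) ((‖μ‖ : ℝ) : ℂ) < δ := by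
    rw [Complex.dist_eq]
    have h5 : ((t : ℝ) : ℂ) - ((‖μ‖ : ℝ) : ℂ) = (((t - ‖μ‖ : ℝ)) : ℂ) := by push_cast; ring
    rw [h5, Complex.norm_real, Real.norm_of_nonneg (by linarith)]
    exact htδ
  have hStb : ‖St‖ ≤ Mb := le_of_lt (hSt ▸ hδ hdistt)
  have hsumz : Summable (fun k : ℕ => (z ^ (k + 1))⁻¹ • Ac ^ k) :=
    Summable.of_norm (summable_norm_res Ac hsp (norm_nonneg μ) hzgt 1)
  have hsumt : Summable (fun k : ℕ => ((((t : ℝ) : ℂ)) ^ (k + 1))⁻¹ • Ac ^ k) :=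
    Summable.of_norm (summable_norm_res Ac hsp (norm_nonneg μ) htgt 1)
  have hterm : ∀ (w : ℂ), ‖w‖ = t → ∀ (k : ℕ) (i j : N),
      ‖(w ^ (k + 1))⁻¹ * (Ac ^ k) i j‖ = (t ^ (k + 1))⁻¹ * (A ^ k) i j := by
    intro w hw k i j
    rw [map_pow_entry A k i j, norm_mul, norm_inv, norm_pow, hw, Complex.norm_real,
      Real.norm_of_nonneg (pow_entry_nonneg hA k i j)]
  have hsumreal : ∀ i j : N, Summable (fun k : ℕ => (t ^ (k + 1))⁻¹ * (A ^ k) i j) := by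
    intro i j
    refine Summable.of_nonneg_of_le
      (fun k => mul_nonneg (inv_nonneg.mpr (pow_nonneg (le_of_lt htpos) _))
        (pow_entry_nonneg hA k i j)) (fun k => ?_)
      (summable_norm_res Ac hsp (norm_nonneg μ) htgt 1)
    rw [← hterm ((t : ℝ) : ℂ) htn k i j]
    have h5 : ((((t : ℝ) : ℂ)) ^ (k + 1))⁻¹ * (Ac ^ k) i j
        = (((((t : ℝ) : ℂ)) ^ (k + 1))⁻¹ • Ac ^ k) i j := rfl
    rw [h5]
    exact entry_norm_le _ i j
  have hentry : ∀ i j, ‖S i j‖ ≤ Mb := by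
    intro i j
    let E : Matrix N N ℂ →ₗ[ℂ] ℂ :=
      { toFun := fun M => M i j, map_add' := fun _ _ => rfl, map_smul' := fun _ _ => rfl }
    let Ec : Matrix N N ℂ →L[ℂ] ℂ := LinearMap.toContinuousLinearMap E
    have hEc : ∀ M : Matrix N N ℂ, Ec M = M i j := fun _ => rfl
    have hSij : S i j = ∑' k : ℕ, (z ^ (k + 1))⁻¹ * (Ac ^ k) i j := by
      have h6 := Ec.map_tsum hsumz
      rw [hEc] at h6
      rw [hSdef, h6]
      exact tsum_congr fun k => by rw [hEc]; rfl
    have hStij : St i j = ∑' k : ℕ, ((((t : ℝ) : ℂ)) ^ (k + 1))⁻¹ * (Ac ^ k) i j := by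
      have h6 := Ec.map_tsum hsumt
      rw [hEc] at h6
      rw [hStdef, h6]
      exact tsum_congr fun k => by rw [hEc]; rfl
    have hnormsum : ‖S i j‖ ≤ ∑' k : ℕ, (t ^ (k + 1))⁻¹ * (A ^ k) i j := by
      rw [hSij]
      have h7 : Summable (fun k : ℕ => ‖(z ^ (k + 1))⁻¹ * (Ac ^ k) i j‖) := by
        have := hsumreal i j
        refine this.congr fun k => ?_
        rw [hterm z hzn k i j]
      refine (norm_tsum_le_tsum_norm h7).trans_eq ?_
      exact tsum_congr fun k => hterm z hzn k i j
    have hReq : St i j = ((∑' k : ℕ, (t ^ (k + 1))⁻¹ * (A ^ k) i j : ℝ) : ℂ) := by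
      rw [hStij]
      have h6 := Complex.ofRealCLM.map_tsum (hsumreal i j)
      simp only [Complex.ofRealCLM_apply] at h6
      rw [h6]
      refine tsum_congr fun k => ?_
      rw [map_pow_entry A k i j]
      push_cast
      ring
    have hRnonneg : 0 ≤ ∑' k : ℕ, (t ^ (k + 1))⁻¹ * (A ^ k) i j :=
      tsum_nonneg fun k => mul_nonneg (inv_nonneg.mpr (pow_nonneg (le_of_lt htpos) _))
        (pow_entry_nonneg hA k i j)
    calc ‖S i j‖ ≤ ∑' k : ℕ, (t ^ (k + 1))⁻¹ * (A ^ k) i j := hnormsum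
      _ = ‖St i j‖ := by rw [hReq, Complex.norm_real, Real.norm_of_nonneg hRnonneg]
      _ ≤ ‖St‖ := entry_norm_le St i j
      _ ≤ Mb := hStb
  -- final contradiction
  have hsubne : z - μ ≠ 0 := by
    refine sub_ne_zero.mpr (fun hc => (ne_of_gt htρ) ?_)
    rw [← hzn, hc]
  have hzsubn : ‖z - μ‖ = t - ‖μ‖ := by
    have h9 : z - μ = (((t - ‖μ‖) / ‖μ‖ : ℝ) : ℂ) * μ := by
      have hr : (t - ‖μ‖) / ‖μ‖ = t / ‖μ‖ - 1 := by
        rw [sub_div, div_self hμne]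
      rw [hzdef, hr]
      push_cast
      ring
    rw [h9, norm_mul, Complex.norm_real,
      Real.norm_of_nonneg (div_nonneg (by linarith) (le_of_lt hρpos)),
      div_mul_cancel₀ _ hμne]
  have hvsub : (z • (1 : Matrix N N ℂ) - Ac) *ᵥ v = (z - μ) • v := by
    rw [Matrix.sub_mulVec, Matrix.smul_mulVec, Matrix.one_mulVec, hAv, ← sub_smul]
  have hSv : S *ᵥ v = (z - μ)⁻¹ • v := by
    have e2 : v = (z - μ) • (S *ᵥ v) := by
      calc v = (1 : Matrix N N ℂ) *ᵥ v := (Matrix.one_mulVec v).symm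
        _ = (S * (z • (1 : Matrix N N ℂ) - Ac)) *ᵥ v := by rw [hz2]
        _ = S *ᵥ ((z • (1 : Matrix N N ℂ) - Ac) *ᵥ v) := by rw [← Matrix.mulVec_mulVec]
        _ = S *ᵥ ((z - μ) • v) := by rw [hvsub]
        _ = (z - μ) • (S *ᵥ v) := Matrix.mulVec_smul S (z - μ) v
    have e3 := congrArg (fun x : (N → ℂ) => (z - μ)⁻¹ • x) e2
    simp only [inv_smul_smul₀ hsubne] at e3
    exact e3.symm
  have happ : (z - μ)⁻¹ * v i0 = ∑ j, S i0 j * v j := by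
    have h10 := congrFun hSv i0
    have h11 : (S *ᵥ v) i0 = ∑ j, S i0 j * v j := rfl
    have h12 : ((z - μ)⁻¹ • v) i0 = (z - μ)⁻¹ * v i0 := rfl
    rw [h11, h12] at h10
    exact h10.symm
  have hle1 : ‖v i0‖ / (t - ‖μ‖) ≤ Mb * V := by
    have h10 : ‖(z - μ)⁻¹ * v i0‖ = ‖v i0‖ / (t - ‖μ‖) := by
      rw [norm_mul, norm_inv, hzsubn]; ring
    rw [← h10, happ]
    calc ‖∑ j, S i0 j * v j‖ ≤ ∑ j, ‖S i0 j * v j‖ := norm_sum_le _ _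
      _ ≤ ∑ j, Mb * ‖v j‖ := Finset.sum_le_sum fun j _ => by
          rw [norm_mul]; exact mul_le_mul_of_nonneg_right (hentry i0 j) (norm_nonneg _)
      _ = Mb * V := by rw [hVdef, Finset.mul_sum]
  have htsubpos : 0 < t - ‖μ‖ := by linarith
  have h11 : ‖v i0‖ ≤ (t - ‖μ‖) * (Mb * V) := by
    rw [div_le_iff₀ htsubpos] at hle1
    linarith [hle1]
  have h12 : (t - ‖μ‖) * (Mb * V) ≤ ε * (Mb * V) :=
    mul_le_mul_of_nonneg_right htε (mul_nonneg (le_of_lt hMb1) (le_of_lt hVpos))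
  nlinarith [hvi0, hε, mul_nonneg (le_of_lt hMb1) (le_of_lt hVpos)]

end PerronFrobenius

section Assembly
variable {m n : ℕ}

lemma root_iff_spec (hm : 1 ≤ m) (hn : 1 ≤ n) (B : Fin n → Matrix (Fin m) (Fin m) ℝ) (z : ℂ) :
    (detMatPoly m n B).eval z = 0 ↔
      z ∈ spectrum ℂ ((compM m n B).map (fun x : ℝ => (x : ℂ))) := by
  haveI : Nonempty (Fin n × Fin m) := ⟨(⟨0, hn⟩, ⟨0, hm⟩)⟩
  set Cc : Matrix (Fin n × Fin m) (Fin n × Fin m) ℂ :=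
    (compM m n B).map (fun x : ℝ => (x : ℂ)) with hCc
  have h1 : (detMatPoly m n B).eval z = 0 ↔
      ∃ v, v ≠ 0 ∧ (z ^ n • (1 : Matrix (Fin m) (Fin m) ℂ) -
        ∑ i : Fin n, z ^ (i : ℕ) • ((B i).map (fun x : ℝ => (x : ℂ)))) *ᵥ v = 0 := by
    rw [eval_detMatPoly]
    exact (Matrix.exists_mulVec_eq_zero_iff).symm
  have h2 := ker_iff_eig hn B z
  have h3 : (∃ w, w ≠ 0 ∧ Cc *ᵥ w = z • w) ↔ (z • 1 - Cc).det = 0 := by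
    rw [← Matrix.exists_mulVec_eq_zero_iff]
    refine exists_congr fun w => and_congr_right fun hw => ?_
    rw [Matrix.sub_mulVec, Matrix.smul_mulVec, Matrix.one_mulVec, sub_eq_zero, eq_comm]
  rw [h1, h2, h3, spec_iff_det]

lemma compM_nonneg {B : Fin n → Matrix (Fin m) (Fin m) ℝ}
    (hB : ∀ i k l, 0 ≤ B i k l) (p q : Fin n × Fin m) : 0 ≤ compM m n B p q := by
  unfold compM
  split_ifs
  · exact zero_le_one
  · exact le_refl 0
  · exact hB _ _ _
  · exact le_refl 0

lemma compM_mono {B Bt : Fin n → Matrix (Fin m) (Fin m) ℝ}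
    (hle : ∀ i k l, Bt i k l ≤ B i k l) (p q : Fin n × Fin m) :
    compM m n Bt p q ≤ compM m n B p q := by
  unfold compM
  split_ifs
  · exact le_refl _
  · exact le_refl _
  · exact hle _ _ _
  · exact le_refl _
end Assembly

/-- if `0 ≤ B̃ᵢ ≤ Bᵢ` entrywise, then `det B(z)` and `det B̃(z)` each have a
nonnegative real root of maximal modulus, `λ` and `λ̃` respectively, and `λ̃ ≤ λ`. -/
theorem stmt0 (m n : ℕ) (hm : 1 ≤ m) (hn : 1 ≤ n)
    (B Bt : Fin n → Matrix (Fin m) (Fin m) ℝ)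
    (hBt0 : ∀ i k l, 0 ≤ Bt i k l)
    (hle : ∀ i k l, Bt i k l ≤ B i k l) :
    ∃ lam lamt : ℝ,
      0 ≤ lam ∧ 0 ≤ lamt ∧
      (detMatPoly m n B).eval (lam : ℂ) = 0 ∧
      (∀ z : ℂ, (detMatPoly m n B).eval z = 0 → ‖z‖ ≤ lam) ∧
      (detMatPoly m n Bt).eval (lamt : ℂ) = 0 ∧
      (∀ z : ℂ, (detMatPoly m n Bt).eval z = 0 → ‖z‖ ≤ lamt) ∧
      lamt ≤ lam := by
  haveI : Nonempty (Fin n × Fin m) := ⟨(⟨0, hn⟩, ⟨0, hm⟩)⟩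
  have hB0 : ∀ i k l, 0 ≤ B i k l := fun i k l => le_trans (hBt0 i k l) (hle i k l)
  obtain ⟨lam, hlam0, hlamspec, hlambound, hlamrad⟩ :=
    pf_main (compM m n B) (compM_nonneg hB0)
  obtain ⟨lamt, hlamt0, hlamtspec, hlamtbound, hlamtrad⟩ :=
    pf_main (compM m n Bt) (compM_nonneg hBt0)
  refine ⟨lam, lamt, hlam0, hlamt0, ?_, ?_, ?_, ?_, ?_⟩
  · exact (root_iff_spec hm hn B (lam : ℂ)).mpr hlamspec
  · exact fun z hz => hlambound z ((root_iff_spec hm hn B z).mp hz)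
  · exact (root_iff_spec hm hn Bt (lamt : ℂ)).mpr hlamtspec
  · exact fun z hz => hlamtbound z ((root_iff_spec hm hn Bt z).mp hz)
  · have hmono := radius_mono (compM_nonneg hBt0) (compM_mono hle)
    rw [hlamrad, hlamtrad] at hmono
    exact (ENNReal.ofReal_le_ofReal_iff hlam0).mp hmono
end

section
/- Let Aᵢ and Ãᵢ, for i = −1, 0, 1, …, be m×m real matrices with nonnegative entries such that Ãᵢ ≤ Aᵢ entrywise for all i ≥ −1 and (Σ_{i=−1}^∞ Aᵢ)·1 ≤ 1 entrywise. If G is the minimal nonnegative solution of X = Σ_{i=0}^∞ A_{i−1} Xⁱ and H is the minimal nonnegative solution of X = Σ_{i=0}^∞ Ã_{i−1} Xⁱ, then H ≤ G entrywise. -/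
open Matrix

/-- Entrywise order on square real matrices. -/
def Mle {m : ℕ} (X Y : Matrix (Fin m) (Fin m) ℝ) : Prop := ∀ i j, X i j ≤ Y i j

/-- `G` is the minimal nonnegative solution of `X = ∑_{i=0}^∞ A_{i-1} Xⁱ`, where
`A i` denotes the coefficient `A_{i-1}` of the paper (index shifted by one). -/
def IsMinSol {m : ℕ} (A : ℕ → Matrix (Fin m) (Fin m) ℝ)
    (G : Matrix (Fin m) (Fin m) ℝ) : Prop :=
  Mle 0 G ∧ Summable (fun i => A i * G ^ i) ∧ G = ∑' i, A i * G ^ i ∧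
    ∀ Y, Mle 0 Y → Summable (fun i => A i * Y ^ i) → Y = ∑' i, A i * Y ^ i → Mle G Y

section aux

variable {m : ℕ}

lemma Mle.trans {X Y Z : Matrix (Fin m) (Fin m) ℝ} (h1 : Mle X Y) (h2 : Mle Y Z) :
    Mle X Z := fun i j => (h1 i j).trans (h2 i j)

lemma mle_mul {B B' X X' : Matrix (Fin m) (Fin m) ℝ}
    (hB0 : Mle 0 B) (hB : Mle B B') (hX0 : Mle 0 X) (hX : Mle X X') :
    Mle (B * X) (B' * X') := by
  intro k j
  simp only [Matrix.mul_apply]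
  refine Finset.sum_le_sum fun l _ => ?_
  have h0l : (0 : ℝ) ≤ B k l := by simpa using hB0 k l
  have h0x : (0 : ℝ) ≤ X l j := by simpa using hX0 l j
  exact mul_le_mul (hB k l) (hX l j) h0x (h0l.trans (hB k l))

lemma mle_mul_nonneg {B X : Matrix (Fin m) (Fin m) ℝ} (hB : Mle 0 B) (hX : Mle 0 X) :
    Mle 0 (B * X) := by
  intro k j
  simp only [Matrix.mul_apply, Matrix.zero_apply]
  exact Finset.sum_nonneg fun l _ =>
    mul_nonneg (by simpa using hB k l) (by simpa using hX l j)

lemma mle_pow_nonneg {X : Matrix (Fin m) (Fin m) ℝ} (hX : Mle 0 X) (i : ℕ) :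
    Mle 0 (X ^ i) := by
  induction i with
  | zero => intro k j; simp [pow_zero, Matrix.one_apply]; positivity
  | succ n ih =>
      rw [pow_succ]
      exact mle_mul_nonneg ih hX

lemma mle_pow {X X' : Matrix (Fin m) (Fin m) ℝ} (hX0 : Mle 0 X) (hX : Mle X X') (i : ℕ) :
    Mle (X ^ i) (X' ^ i) := by
  induction i with
  | zero => intro k j; simp
  | succ n ih =>
      rw [pow_succ, pow_succ]
      exact mle_mul (mle_pow_nonneg hX0 n) ih hX0 hX

/-- Entrywise evaluation of a matrix tsum. -/
lemma entry_tsum {M : ℕ → Matrix (Fin m) (Fin m) ℝ} (h : Summable M) (k j : Fin m) :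
    (∑' i, M i) k j = ∑' i, M i k j := by
  have hc : Continuous fun X : Matrix (Fin m) (Fin m) ℝ => X k j :=
    continuous_id.matrix_elem k j
  exact ((h.hasSum.map (Matrix.entryAddMonoidHom ℝ k j) hc).tsum_eq).symm

lemma entry_summable {M : ℕ → Matrix (Fin m) (Fin m) ℝ} (h : Summable M) (k j : Fin m) :
    Summable (fun i => M i k j) := by
  have hc : Continuous fun X : Matrix (Fin m) (Fin m) ℝ => X k j :=
    continuous_id.matrix_elem k j
  exact (h.hasSum.map (Matrix.entryAddMonoidHom ℝ k j) hc).summable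

lemma summable_of_entries {M : ℕ → Matrix (Fin m) (Fin m) ℝ}
    (h : ∀ k j, Summable (fun i => M i k j)) : Summable M := by
  refine Pi.summable.2 fun k => Pi.summable.2 fun j => h k j

end aux

/-- comparison of minimal nonnegative solutions.  Here `A i` and `At i`
stand for `A_{i-1}` and `Ã_{i-1}` of the paper, `i = 0, 1, 2, …`. -/
theorem stmt1 (m : ℕ) (hm : 1 ≤ m)
    (A At : ℕ → Matrix (Fin m) (Fin m) ℝ)
    (hA0 : ∀ i, Mle 0 (A i)) (hAt0 : ∀ i, Mle 0 (At i))
    (hle : ∀ i, Mle (At i) (A i))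
    (hsum : Summable A)
    (hrow : ∀ k, ∑ j, (∑' i, A i) k j ≤ 1)
    (G H : Matrix (Fin m) (Fin m) ℝ)
    (hG : IsMinSol A G) (hH : IsMinSol At H) :
    Mle H G := by
  obtain ⟨hG0, hGsum, hGeq, -⟩ := hG
  obtain ⟨-, -, -, hHmin⟩ := hH
  -- bound: entries of the series for G
  set bnd : ℕ → Matrix (Fin m) (Fin m) ℝ := fun i => A i * G ^ i with hbnd
  -- termwise comparison, for any 0 ≤ X ≤ G
  have hterm : ∀ (X : Matrix (Fin m) (Fin m) ℝ), Mle 0 X → Mle X G →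
      ∀ i, Mle (At i * X ^ i) (bnd i) := by
    intro X hX0 hXG i
    exact mle_mul (hAt0 i) (hle i) (mle_pow_nonneg hX0 i) (mle_pow hX0 hXG i)
  have hterm0 : ∀ (X : Matrix (Fin m) (Fin m) ℝ), Mle 0 X →
      ∀ i, Mle 0 (At i * X ^ i) := by
    intro X hX0 i
    exact mle_mul_nonneg (hAt0 i) (mle_pow_nonneg hX0 i)
  -- summability of the series for any 0 ≤ X ≤ G
  have hsummable : ∀ (X : Matrix (Fin m) (Fin m) ℝ), Mle 0 X → Mle X G →
      Summable (fun i => At i * X ^ i) := by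
    intro X hX0 hXG
    refine summable_of_entries fun k j => ?_
    refine Summable.of_nonneg_of_le (fun i => hterm0 X hX0 i k j)
      (fun i => hterm X hX0 hXG i k j) (entry_summable hGsum k j)
  -- the iteration map
  set f : Matrix (Fin m) (Fin m) ℝ → Matrix (Fin m) (Fin m) ℝ :=
    fun X => ∑' i, At i * X ^ i with hf
  have hf_entry : ∀ X, Mle 0 X → Mle X G → ∀ k j,
      f X k j = ∑' i, (At i * X ^ i) k j := by
    intro X hX0 hXG k j
    exact entry_tsum (hsummable X hX0 hXG) k j
  have hf0 : ∀ X, Mle 0 X → Mle X G → Mle 0 (f X) := by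
    intro X hX0 hXG k j
    rw [hf_entry X hX0 hXG k j]
    simpa using tsum_nonneg (fun i => hterm0 X hX0 i k j)
  have hfleG : ∀ X, Mle 0 X → Mle X G → Mle (f X) G := by
    intro X hX0 hXG k j
    rw [hf_entry X hX0 hXG k j]
    have : (∑' i, (At i * X ^ i) k j) ≤ ∑' i, bnd i k j :=
      Summable.tsum_le_tsum (fun i => hterm X hX0 hXG i k j)
        (Summable.of_nonneg_of_le (fun i => hterm0 X hX0 i k j)
          (fun i => hterm X hX0 hXG i k j) (entry_summable hGsum k j))
        (entry_summable hGsum k j)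
    calc (∑' i, (At i * X ^ i) k j) ≤ ∑' i, bnd i k j := this
    _ = (∑' i, bnd i) k j := (entry_tsum hGsum k j).symm
    _ = G k j := by rw [← hGeq]
  have hfmono : ∀ X X', Mle 0 X → Mle X X' → Mle X' G → Mle (f X) (f X') := by
    intro X X' hX0 hXX' hX'G k j
    have hX'0 : Mle 0 X' := fun a b => (hX0 a b).trans (hXX' a b)
    have hXG : Mle X G := hXX'.trans hX'G
    rw [hf_entry X hX0 hXG k j, hf_entry X' hX'0 hX'G k j]
    refine Summable.tsum_le_tsum (fun i => mle_mul (hAt0 i) (fun a b => le_rfl)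
        (mle_pow_nonneg hX0 i) (mle_pow hX0 hXX' i) k j)
      (Summable.of_nonneg_of_le (fun i => hterm0 X hX0 i k j)
        (fun i => hterm X hX0 hXG i k j) (entry_summable hGsum k j))
      (Summable.of_nonneg_of_le (fun i => hterm0 X' hX'0 i k j)
        (fun i => hterm X' hX'0 hX'G i k j) (entry_summable hGsum k j))
  -- the iterates
  set Y : ℕ → Matrix (Fin m) (Fin m) ℝ := fun n => f^[n] 0 with hY
  have hYsucc : ∀ n, Y (n + 1) = f (Y n) := by
    intro n
    simp [hY, Function.iterate_succ_apply']
  have hYprop : ∀ n, Mle 0 (Y n) ∧ Mle (Y n) G := by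
    intro n
    induction n with
    | zero => exact ⟨fun a b => le_rfl, hG0⟩
    | succ n ih =>
        rw [hYsucc n]
        exact ⟨hf0 _ ih.1 ih.2, hfleG _ ih.1 ih.2⟩
  have hYmono : ∀ n, Mle (Y n) (Y (n + 1)) := by
    intro n
    induction n with
    | zero =>
        rw [hYsucc 0]
        have h0 : Y 0 = 0 := rfl
        rw [h0]
        exact hf0 0 (fun a b => le_rfl) hG0
    | succ n ih =>
        rw [hYsucc n, hYsucc (n + 1)]
        exact hfmono _ _ (hYprop n).1 ih (hYprop (n + 1)).2
  have hYmono' : ∀ k j, Monotone fun n => Y n k j := by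
    intro k j
    exact monotone_nat_of_le_succ fun n => hYmono n k j
  have hbdd : ∀ k j, BddAbove (Set.range fun n => Y n k j) :=
    fun k j => ⟨G k j, by rintro x ⟨n, rfl⟩; exact (hYprop n).2 k j⟩
  -- the limit
  set L : Matrix (Fin m) (Fin m) ℝ := Matrix.of fun k j => ⨆ n, Y n k j with hL
  have hLlim : ∀ k j, Filter.Tendsto (fun n => Y n k j) Filter.atTop (nhds (L k j)) :=
    fun k j => tendsto_atTop_ciSup (hYmono' k j) (hbdd k j)
  have hL0 : Mle 0 L := by
    intro k j
    have := le_ciSup (hbdd k j) 0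
    simpa [hL] using le_trans (by simpa [hY] using (hYprop 0).1 k j) this
  have hLG : Mle L G := by
    intro k j
    exact ciSup_le fun n => (hYprop n).2 k j
  -- convergence of Y n to L in the matrix topology
  have hLlimM : Filter.Tendsto Y Filter.atTop (nhds L) := by
    refine tendsto_pi_nhds.2 ?_
    intro k
    rw [tendsto_pi_nhds]
    intro j
    exact hLlim k j
  -- the limit satisfies the fixed point equation, entrywise
  have hkey : ∀ k j, L k j = ∑' i, (At i * L ^ i) k j := by
    intro k j
    have h1 : Filter.Tendsto (fun n => Y (n + 1) k j) Filter.atTop (nhds (L k j)) :=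
      (hLlim k j).comp (Filter.tendsto_add_atTop_nat 1)
    have h2 : Filter.Tendsto (fun n => ∑' i, (At i * Y n ^ i) k j) Filter.atTop
        (nhds (∑' i, (At i * L ^ i) k j)) := by
      refine tendsto_tsum_of_dominated_convergence (bound := fun i => bnd i k j)
        (entry_summable hGsum k j) ?_ ?_
      · intro i
        have hc : Continuous fun X : Matrix (Fin m) (Fin m) ℝ => (At i * X ^ i) k j :=
          (continuous_const.mul (continuous_pow i)).matrix_elem k j
        exact (hc.tendsto L).comp hLlimM
      · refine Filter.Eventually.of_forall fun n i => ?_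
        rw [Real.norm_eq_abs, abs_of_nonneg (by simpa using hterm0 _ (hYprop n).1 i k j)]
        exact hterm _ (hYprop n).1 (hYprop n).2 i k j
    have h3 : ∀ n, Y (n + 1) k j = ∑' i, (At i * Y n ^ i) k j := by
      intro n
      rw [hYsucc n]
      exact hf_entry _ (hYprop n).1 (hYprop n).2 k j
    have h1' : Filter.Tendsto (fun n => ∑' i, (At i * Y n ^ i) k j) Filter.atTop
        (nhds (L k j)) := by
      refine h1.congr fun n => h3 n
    exact tendsto_nhds_unique h1' h2
  have hLsummable : Summable (fun i => At i * L ^ i) := hsummable L hL0 hLG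
  have hLeq : L = ∑' i, At i * L ^ i := by
    funext k j
    rw [entry_tsum hLsummable k j]
    exact hkey k j
  exact (hHmin L hL0 hLsummable hLeq).trans hLG
end

section
/- Let G, X_k, X_{k+1} be m×m matrices (for which all series below converge entrywise) such that G = Σ_{ℓ=−1}^q A_ℓ(G) G^{ℓ+1} and X_{k+1} = Σ_{ℓ=−1}^q A_ℓ(X_k) X_{k+1}^{ℓ+1}. Set E_k = G − X_k and E_{k+1} = G − X_{k+1}. Then E_{k+1} = Σ_{ℓ=0}^q A_ℓ(G) Σ_{j=0}^ℓ G^j E_{k+1} X_{k+1}^{ℓ−j} + Σ_{ℓ=−1}^q Σ_{i=1}^∞ A_{ℓ,i} Σ_{j=0}^{i−1} G^j E_k X_k^{i−j−1} X_{k+1}^{ℓ+1}. -/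
open Matrix

set_option maxHeartbeats 1000000

/-- Telescoping identity in a noncommutative ring. -/
lemma telescope {R : Type*} [Ring R] (X Y : R) (n : ℕ) :
    X ^ n - Y ^ n = ∑ j ∈ Finset.range n, X ^ j * (X - Y) * Y ^ (n - 1 - j) := by
  induction n with
  | zero => simp
  | succ n ih =>
    rw [Finset.sum_range_succ]
    have hstep : ∑ j ∈ Finset.range n, X ^ j * (X - Y) * Y ^ (n + 1 - 1 - j)
        = (∑ j ∈ Finset.range n, X ^ j * (X - Y) * Y ^ (n - 1 - j)) * Y := by
      rw [Finset.sum_mul]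
      refine Finset.sum_congr rfl fun j hj => ?_
      have hj' : j < n := Finset.mem_range.mp hj
      rw [mul_assoc (X ^ j * (X - Y)), ← pow_succ]
      congr 2
      omega
    rw [hstep, ← ih]
    have h0 : n + 1 - 1 - n = 0 := by omega
    rw [h0, pow_zero, mul_one, pow_succ, pow_succ]
    noncomm_ring

/-- error recursion, Theorem 3.3 of the paper.  Here `A i` denotes
`A_{i-1}`, `p = q+1 ≥ 0`, and `Aℓ ℓ' i` denotes `A_{ℓ'-1, i}`; the matrix function
`A_ℓ(X)` is `∑' i, Aℓ ℓ' i * X ^ i`. -/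
theorem stmt3 (m : ℕ) (hm : 1 ≤ m) (p : ℕ)
    (A : ℕ → Matrix (Fin m) (Fin m) ℝ)
    (Aℓ : ℕ → ℕ → Matrix (Fin m) (Fin m) ℝ)
    (hA0 : ∀ i, Mle 0 (A i)) (hAℓ0 : ∀ ℓ i, Mle 0 (Aℓ ℓ i))
    (hsum : Summable A)
    (hcompat : ∀ i, A i = ∑ ℓ ∈ Finset.range (p + 1),
      if ℓ ≤ i then Aℓ ℓ (i - ℓ) else 0)
    (G Xk Xk1 : Matrix (Fin m) (Fin m) ℝ)
    -- all series occurring converge entrywise: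
    (hsG : ∀ ℓ, Summable (fun i => Aℓ ℓ i * G ^ i))
    (hsX : ∀ ℓ, Summable (fun i => Aℓ ℓ i * Xk ^ i))
    (hsS : ∀ ℓ, Summable (fun i =>
      Aℓ ℓ (i + 1) *
        (∑ j ∈ Finset.range (i + 1), G ^ j * (G - Xk) * Xk ^ (i - j)) * Xk1 ^ ℓ))
    -- `G = ∑_{ℓ=-1}^q A_ℓ(G) G^{ℓ+1}` :
    (hGeq : G = ∑ ℓ ∈ Finset.range (p + 1), (∑' i, Aℓ ℓ i * G ^ i) * G ^ ℓ)
    -- `X_{k+1} = ∑_{ℓ=-1}^q A_ℓ(X_k) X_{k+1}^{ℓ+1}` :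
    (hXeq : Xk1 = ∑ ℓ ∈ Finset.range (p + 1), (∑' i, Aℓ ℓ i * Xk ^ i) * Xk1 ^ ℓ) :
    G - Xk1 =
      (∑ ℓ ∈ Finset.range (p + 1), (∑' i, Aℓ ℓ i * G ^ i) *
          ∑ j ∈ Finset.range ℓ, G ^ j * (G - Xk1) * Xk1 ^ (ℓ - 1 - j)) +
        ∑ ℓ ∈ Finset.range (p + 1), ∑' i,
          Aℓ ℓ (i + 1) *
            (∑ j ∈ Finset.range (i + 1), G ^ j * (G - Xk) * Xk ^ (i - j)) * Xk1 ^ ℓ := by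
  have key : ∀ ℓ,
      (∑' i, Aℓ ℓ i * G ^ i) * G ^ ℓ - (∑' i, Aℓ ℓ i * Xk ^ i) * Xk1 ^ ℓ
        = (∑' i, Aℓ ℓ i * G ^ i) *
            (∑ j ∈ Finset.range ℓ, G ^ j * (G - Xk1) * Xk1 ^ (ℓ - 1 - j)) +
          ∑' i, Aℓ ℓ (i + 1) *
            (∑ j ∈ Finset.range (i + 1), G ^ j * (G - Xk) * Xk ^ (i - j)) * Xk1 ^ ℓ := by
    intro ℓ
    have h1 : ∑ j ∈ Finset.range ℓ, G ^ j * (G - Xk1) * Xk1 ^ (ℓ - 1 - j)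
        = G ^ ℓ - Xk1 ^ ℓ := (telescope G Xk1 ℓ).symm
    have hshiftG : Summable (fun i => Aℓ ℓ (i + 1) * G ^ (i + 1)) :=
      (summable_nat_add_iff 1).2 (hsG ℓ)
    have hshiftX : Summable (fun i => Aℓ ℓ (i + 1) * Xk ^ (i + 1)) :=
      (summable_nat_add_iff 1).2 (hsX ℓ)
    have hg : Summable (fun i => Aℓ ℓ (i + 1) * (G ^ (i + 1) - Xk ^ (i + 1))) := by
      simpa [mul_sub] using hshiftG.sub hshiftX
    have htel : ∀ i : ℕ, ∑ j ∈ Finset.range (i + 1), G ^ j * (G - Xk) * Xk ^ (i - j)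
        = G ^ (i + 1) - Xk ^ (i + 1) := by
      intro i
      rw [telescope G Xk (i + 1)]
      simp
    have h2 : (∑' i, Aℓ ℓ (i + 1) *
          (∑ j ∈ Finset.range (i + 1), G ^ j * (G - Xk) * Xk ^ (i - j)) * Xk1 ^ ℓ)
        = ((∑' i, Aℓ ℓ i * G ^ i) - (∑' i, Aℓ ℓ i * Xk ^ i)) * Xk1 ^ ℓ := by
      have e1 : (∑' i, Aℓ ℓ (i + 1) *
            (∑ j ∈ Finset.range (i + 1), G ^ j * (G - Xk) * Xk ^ (i - j)) * Xk1 ^ ℓ)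
          = (∑' i, Aℓ ℓ (i + 1) * (G ^ (i + 1) - Xk ^ (i + 1))) * Xk1 ^ ℓ := by
        rw [← hg.tsum_mul_right (Xk1 ^ ℓ)]
        exact tsum_congr fun i => by rw [htel i]
      rw [e1]
      congr 1
      have hf : Summable (fun i => Aℓ ℓ i * G ^ i - Aℓ ℓ i * Xk ^ i) :=
        (hsG ℓ).sub (hsX ℓ)
      have := Summable.tsum_eq_zero_add hf
      simp only [pow_zero, mul_one, sub_self, zero_add] at this
      rw [← Summable.tsum_sub (hsG ℓ) (hsX ℓ), this]
      exact tsum_congr fun i => mul_sub _ _ _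
    rw [h1, h2]
    noncomm_ring
  calc G - Xk1
      = ∑ ℓ ∈ Finset.range (p + 1),
          ((∑' i, Aℓ ℓ i * G ^ i) * G ^ ℓ - (∑' i, Aℓ ℓ i * Xk ^ i) * Xk1 ^ ℓ) := by
        rw [Finset.sum_sub_distrib, ← hGeq, ← hXeq]
    _ = ∑ ℓ ∈ Finset.range (p + 1),
          ((∑' i, Aℓ ℓ i * G ^ i) *
              (∑ j ∈ Finset.range ℓ, G ^ j * (G - Xk1) * Xk1 ^ (ℓ - 1 - j)) +
            ∑' i, Aℓ ℓ (i + 1) *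
              (∑ j ∈ Finset.range (i + 1), G ^ j * (G - Xk) * Xk ^ (i - j)) * Xk1 ^ ℓ) :=
        Finset.sum_congr rfl fun ℓ _ => key ℓ
    _ = _ := by rw [Finset.sum_add_distrib]
end

section
/- With F = Σ_{ℓ=0}^q A_ℓ(G) Σ_{j=0}^ℓ G^j, M = I − F, N = Σ_{ℓ=−1}^q Σ_{i=1}^∞ A_{ℓ,i} Σ_{j=0}^{i−1} G^j, A_j^* = Σ_{r=j}^∞ A_r G^{r−j} for j ≥ 0 and V = Σ_{j=0}^∞ A_j^*, one has the matrix identity M − N = I − V, equivalently F + N = V. -/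
open Matrix

section Aux

variable {m : ℕ}

/-- Partial geometric sum `S n = ∑_{j<n} G^j`. -/
def Spw (G : Matrix (Fin m) (Fin m) ℝ) (n : ℕ) : Matrix (Fin m) (Fin m) ℝ :=
  ∑ j ∈ Finset.range n, G ^ j

lemma Spw_def (G : Matrix (Fin m) (Fin m) ℝ) (n : ℕ) :
    ∑ j ∈ Finset.range n, G ^ j = Spw G n := rfl

lemma Spw_zero (G : Matrix (Fin m) (Fin m) ℝ) : Spw G 0 = 0 := by
  simp [Spw]

lemma Spw_add (G : Matrix (Fin m) (Fin m) ℝ) (i ℓ : ℕ) :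
    Spw G (i + ℓ) = Spw G i + G ^ i * Spw G ℓ := by
  unfold Spw
  rw [Finset.sum_range_add, Finset.mul_sum]
  congr 1
  exact Finset.sum_congr rfl fun j _ => (pow_add G i j)

lemma mle_mul_s5 {X Y : Matrix (Fin m) (Fin m) ℝ} (hX : Mle 0 X) (hY : Mle 0 Y) :
    Mle 0 (X * Y) := by
  intro i j
  simp only [Matrix.zero_apply, Matrix.mul_apply]
  exact Finset.sum_nonneg fun c _ =>
    mul_nonneg (by simpa using hX i c) (by simpa using hY c j)

lemma mle_pow_s5 {G : Matrix (Fin m) (Fin m) ℝ} (hG : Mle 0 G) (k : ℕ) :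
    Mle 0 (G ^ k) := by
  induction k with
  | zero =>
      intro i j
      simp only [pow_zero, Matrix.zero_apply, Matrix.one_apply]
      split <;> norm_num
  | succ n ih =>
      rw [pow_succ]
      exact mle_mul_s5 ih hG

end Aux

/-- the identity `M - N = I - V`, equivalently `F + N = V`.  Here
`A i` denotes `A_{i-1}`, `p = q+1 ≥ 0`, `Aℓ ℓ' i` denotes `A_{ℓ'-1, i}`;
`A_j^* = ∑' k, A (j+k+1) * G^k` and `V = ∑' j, A_j^*`. -/
theorem stmt5 (m : ℕ) (hm : 1 ≤ m) (p : ℕ)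
    (A : ℕ → Matrix (Fin m) (Fin m) ℝ)
    (Aℓ : ℕ → ℕ → Matrix (Fin m) (Fin m) ℝ)
    (hA0 : ∀ i, Mle 0 (A i)) (hAℓ0 : ∀ ℓ i, Mle 0 (Aℓ ℓ i))
    (hsum : Summable A)
    (hrow : ∀ k, ∑ j, (∑' i, A i) k j ≤ 1)
    (hcompat : ∀ i, A i = ∑ ℓ ∈ Finset.range (p + 1),
      if ℓ ≤ i then Aℓ ℓ (i - ℓ) else 0)
    (G : Matrix (Fin m) (Fin m) ℝ) (hG : IsMinSol A G)
    -- all series occurring converge (absolutely) entrywise: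
    (hsG : ∀ ℓ, Summable (fun i => Aℓ ℓ i * G ^ i))
    (hsN : ∀ ℓ, Summable (fun i => Aℓ ℓ (i + 1) * ∑ j ∈ Finset.range (i + 1), G ^ j))
    (hsAstar : ∀ j, Summable (fun k => A (j + k + 1) * G ^ k))
    (hsV : Summable (fun j => ∑' k, A (j + k + 1) * G ^ k)) :
    (∑ ℓ ∈ Finset.range (p + 1),
        (∑' i, Aℓ ℓ i * G ^ i) * ∑ j ∈ Finset.range ℓ, G ^ j) +
      (∑ ℓ ∈ Finset.range (p + 1),
        ∑' i, Aℓ ℓ (i + 1) * ∑ j ∈ Finset.range (i + 1), G ^ j) =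
      (∑' j : ℕ, ∑' k : ℕ, A (j + k + 1) * G ^ k) ∧
    ((1 : Matrix (Fin m) (Fin m) ℝ) -
        ∑ ℓ ∈ Finset.range (p + 1),
          (∑' i, Aℓ ℓ i * G ^ i) * ∑ j ∈ Finset.range ℓ, G ^ j) -
      (∑ ℓ ∈ Finset.range (p + 1),
        ∑' i, Aℓ ℓ (i + 1) * ∑ j ∈ Finset.range (i + 1), G ^ j) =
      1 - ∑' j : ℕ, ∑' k : ℕ, A (j + k + 1) * G ^ k := by
  classical
  have hG0 : Mle 0 G := hG.1
  -- abbreviate the partial geometric sums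
  simp only [Spw_def]
  -- restated convergence hypotheses
  have hsN' : ∀ ℓ, Summable (fun i => Aℓ ℓ (i + 1) * Spw G (i + 1)) := by
    intro ℓ; simpa only [Spw_def] using hsN ℓ
  have hsucc_inj : Function.Injective (fun n : ℕ => n + 1) := add_left_injective 1
  -- summability of i ↦ Aℓ ℓ i * S i
  have hK : ∀ ℓ, Summable (fun i => Aℓ ℓ i * Spw G i) := by
    intro ℓ
    refine (Function.Injective.summable_iff hsucc_inj ?_).mp (hsN' ℓ)
    rintro (_ | n) hx
    · simp [Spw_zero]
    · exact absurd ⟨n, rfl⟩ hx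
  -- summability of i ↦ Aℓ ℓ i * S (i + ℓ)
  have hTsum : ∀ ℓ, Summable (fun i => Aℓ ℓ i * Spw G (i + ℓ)) := by
    intro ℓ
    have he : (fun i => Aℓ ℓ i * Spw G (i + ℓ)) =
        fun i => Aℓ ℓ i * Spw G i + (Aℓ ℓ i * G ^ i) * Spw G ℓ := by
      funext i; rw [Spw_add, mul_add, mul_assoc]
    rw [he]
    exact (hK ℓ).add ((hsG ℓ).mul_right _)
  -- the function H
  set H : ℕ → ℕ → Matrix (Fin m) (Fin m) ℝ :=
    fun ℓ x => (if ℓ ≤ x then Aℓ ℓ (x - ℓ) else 0) * Spw G x with hHdef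
  have hH0 : ∀ ℓ x, x < ℓ → H ℓ x = 0 := by
    intro ℓ x hx
    simp [hHdef, Nat.not_le.mpr hx]
  have hHzero : ∀ ℓ, H ℓ 0 = 0 := by
    intro ℓ; simp [hHdef, Spw_zero]
  have hHshift : ∀ ℓ i, H ℓ (i + ℓ) = Aℓ ℓ i * Spw G (i + ℓ) := by
    intro ℓ i
    simp [hHdef, Nat.le_add_left, Nat.add_sub_cancel]
  have haddinj : ∀ ℓ : ℕ, Function.Injective (fun i : ℕ => i + ℓ) :=
    fun ℓ => add_left_injective ℓ
  have hHrange : ∀ ℓ, ∀ x ∉ Set.range (fun i : ℕ => i + ℓ), H ℓ x = 0 := by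
    intro ℓ x hx
    refine hH0 ℓ x ?_
    by_contra h
    push_neg at h
    exact hx ⟨x - ℓ, by dsimp only; omega⟩
  have hHsum : ∀ ℓ, Summable (H ℓ) := by
    intro ℓ
    refine (Function.Injective.summable_iff (haddinj ℓ) (hHrange ℓ)).mp ?_
    exact Summable.congr (hTsum ℓ) fun i => (hHshift ℓ i).symm
  have hH1 : ∀ ℓ, Summable (fun n => H ℓ (n + 1)) := fun ℓ =>
    (hHsum ℓ).comp_injective hsucc_inj
  -- per-ℓ identity
  have hTl : ∀ ℓ, (∑' i, Aℓ ℓ i * G ^ i) * Spw G ℓ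
      + (∑' i, Aℓ ℓ (i + 1) * Spw G (i + 1)) = ∑' n, H ℓ (n + 1) := by
    intro ℓ
    have e1 : (∑' i, Aℓ ℓ i * G ^ i) * Spw G ℓ = ∑' i, (Aℓ ℓ i * G ^ i) * Spw G ℓ :=
      ((hsG ℓ).tsum_mul_right _).symm
    have e2 : (∑' i, Aℓ ℓ (i + 1) * Spw G (i + 1)) = ∑' i, Aℓ ℓ i * Spw G i := by
      refine Function.Injective.tsum_eq (g := fun n : ℕ => n + 1) hsucc_inj
        (f := fun i => Aℓ ℓ i * Spw G i) ?_
      rintro (_ | n) hx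
      · exfalso; apply hx; simp [Spw_zero]
      · exact ⟨n, rfl⟩
    rw [e1, e2, ← Summable.tsum_add ((hsG ℓ).mul_right _) (hK ℓ)]
    have e3 : ∑' i, ((Aℓ ℓ i * G ^ i) * Spw G ℓ + Aℓ ℓ i * Spw G i)
        = ∑' i, Aℓ ℓ i * Spw G (i + ℓ) :=
      tsum_congr fun i => by rw [Spw_add, mul_add, ← mul_assoc]; exact add_comm _ _
    have e4 : ∑' i, Aℓ ℓ i * Spw G (i + ℓ) = ∑' x, H ℓ x := by
      rw [← Function.Injective.tsum_eq (haddinj ℓ)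
        (f := H ℓ) (Function.support_subset_iff'.mpr (hHrange ℓ))]
      exact tsum_congr fun i => (hHshift ℓ i).symm
    have e5 : ∑' n, H ℓ (n + 1) = ∑' x, H ℓ x := by
      refine Function.Injective.tsum_eq hsucc_inj ?_
      rintro (_ | n) hx
      · exact absurd (hHzero ℓ) hx
      · exact ⟨n, rfl⟩
    rw [e3, e4, ← e5]
  -- the LHS equals ∑' n, A (n+1) * S (n+1)
  have hLHS : (∑ ℓ ∈ Finset.range (p + 1), (∑' i, Aℓ ℓ i * G ^ i) * Spw G ℓ) +
      (∑ ℓ ∈ Finset.range (p + 1), ∑' i, Aℓ ℓ (i + 1) * Spw G (i + 1)) =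
      ∑' n, A (n + 1) * Spw G (n + 1) := by
    rw [← Finset.sum_add_distrib]
    have h1 : ∀ ℓ ∈ Finset.range (p + 1), (∑' i, Aℓ ℓ i * G ^ i) * Spw G ℓ
        + (∑' i, Aℓ ℓ (i + 1) * Spw G (i + 1)) = ∑' n, H ℓ (n + 1) :=
      fun ℓ _ => hTl ℓ
    rw [Finset.sum_congr rfl h1, ← Summable.tsum_finsetSum fun ℓ _ => hH1 ℓ]
    refine tsum_congr fun n => ?_
    rw [hcompat (n + 1), Finset.sum_mul]
  -- marginal summability
  have hmarg : Summable (fun n => A (n + 1) * Spw G (n + 1)) := by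
    refine Summable.congr (summable_sum (s := Finset.range (p + 1))
      fun ℓ _ => hH1 ℓ) fun n => ?_
    rw [hcompat (n + 1), Finset.sum_mul]
  -- the auxiliary function on pairs
  set F2 : ℕ × ℕ → Matrix (Fin m) (Fin m) ℝ :=
    fun q => if q.2 ≤ q.1 then A (q.1 + 1) * G ^ q.2 else 0 with hF2def
  have hslice : ∀ n, Summable fun k => F2 (n, k) := by
    intro n
    refine summable_of_ne_finset_zero (s := Finset.range (n + 1)) fun k hk => ?_
    simp only [Finset.mem_range] at hk
    exact if_neg (by omega)
  have hinner : ∀ n, ∑' k, F2 (n, k) = A (n + 1) * Spw G (n + 1) := by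
    intro n
    rw [tsum_eq_sum (s := Finset.range (n + 1))
      (fun k hk => if_neg (by simp only [Finset.mem_range] at hk; omega))]
    rw [show Spw G (n + 1) = ∑ k ∈ Finset.range (n + 1), G ^ k from rfl, Finset.mul_sum]
    exact Finset.sum_congr rfl fun k hk =>
      if_pos (by simp only [Finset.mem_range] at hk; omega)
  have hF20 : ∀ q : ℕ × ℕ, Mle 0 (F2 q) := by
    intro q
    by_cases h : q.2 ≤ q.1
    · simpa [hF2def, h] using mle_mul_s5 (hA0 (q.1 + 1)) (mle_pow_s5 hG0 q.2)
    · simp only [hF2def, if_neg h]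
      exact fun i j => le_rfl
  have hF2sum : Summable F2 := by
    refine Pi.summable.mpr fun a => Pi.summable.mpr fun b => ?_
    refine (summable_prod_of_nonneg fun q => hF20 q a b).mpr ⟨?_, ?_⟩
    · intro n
      exact Pi.summable.mp (Pi.summable.mp (hslice n) a) b
    · have he : ∀ n, ∑' k, F2 (n, k) a b = (A (n + 1) * Spw G (n + 1)) a b := by
        intro n
        rw [← hinner n]
        exact ((congrFun (tsum_apply (hslice n) (x := a)) b).trans
          (tsum_apply (Pi.summable.mp (hslice n) a) (x := b))).symm
      exact Summable.congr (Pi.summable.mp (Pi.summable.mp hmarg a) b)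
        fun n => (he n).symm
  have hginj : Function.Injective (fun q : ℕ × ℕ => (q.1 + q.2, q.2)) := by
    rintro ⟨a, b⟩ ⟨c, d⟩ h
    simp only [Prod.mk.injEq] at h
    obtain ⟨h1, h2⟩ := h
    simp only [Prod.mk.injEq]
    omega
  have hfprod : Summable (fun q : ℕ × ℕ => A (q.1 + q.2 + 1) * G ^ q.2) := by
    refine Summable.congr (hF2sum.comp_injective hginj) fun q => ?_
    simp only [Function.comp_apply, hF2def]
    exact if_pos (Nat.le_add_left _ _)
  -- the RHS equals ∑' n, A (n+1) * S (n+1)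
  have hV : (∑' (j : ℕ), ∑' (k : ℕ), A (j + k + 1) * G ^ k)
      = ∑' n, A (n + 1) * Spw G (n + 1) := by
    have s1 : (∑' (j : ℕ), ∑' (k : ℕ), A (j + k + 1) * G ^ k)
        = ∑' q : ℕ × ℕ, A (q.1 + q.2 + 1) * G ^ q.2 :=
      (Summable.tsum_prod' hfprod fun j => hsAstar j).symm
    have s2 : (∑' q : ℕ × ℕ, A (q.1 + q.2 + 1) * G ^ q.2) = ∑' q : ℕ × ℕ, F2 q := by
      have hsupp : Function.support F2 ⊆ Set.range (fun q : ℕ × ℕ => (q.1 + q.2, q.2)) := by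
        rintro ⟨n, k⟩ hq
        have hk : k ≤ n := by
          by_contra h
          exact hq (if_neg h)
        exact ⟨(n - k, k), by dsimp only; rw [Prod.mk.injEq]; exact ⟨by omega, rfl⟩⟩
      have := Function.Injective.tsum_eq hginj (f := F2) hsupp
      rw [← this]
      exact tsum_congr fun q => (if_pos (Nat.le_add_left _ _)).symm
    have s3 : (∑' q : ℕ × ℕ, F2 q) = ∑' n, ∑' k, F2 (n, k) :=
      Summable.tsum_prod' hF2sum hslice
    rw [s1, s2, s3]
    exact tsum_congr hinner
  refine ⟨?_, ?_⟩
  · rw [hLHS, hV]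
  · rw [sub_sub, hLHS, hV]
end
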